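/- arXiv:2407.10316 — 2 statements merged into one kernel-verified Lean document; each statement's English description precedes it below -/
import Mathlib

section
/- Let M be a loopless matroid (every singleton in the ground set is independent) of finite rank on a linearly ordered type α, and let B be a base of M. Define f on the ground set of M by: f(x) = x if x ∈ B, and otherwise f(x) is the least element of B belonging to the unique circuit of M contained in {x} ∪ B (the fundamental circuit of x with respect to B). Then for every set S of elements of M, the number of distinct values of f on S is at most the rank of S in M. -/
open Set

/-- The rank of a set in a matroid: the supremum of the cardinalities of its
independent subsets. -/
noncomputable def mRank {α : Type*} (M : Matroid α) (S : Set α) : ℕ∞ :=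
  ⨆ I ∈ {I : Set α | M.Indep I ∧ I ⊆ S}, I.encard

/-- The rank of a set of vectors: the dimension of its linear span. -/
noncomputable def spanRank (K : Type*) [Field K] {W : Type*} [AddCommGroup W] [Module K W]
    (S : Set W) : ℕ :=
  Module.finrank K (Submodule.span K S)

/-- A circuit of a matroid: a minimal dependent subset of the ground set. -/
def IsCircuitOf {α : Type*} (M : Matroid α) (C : Set α) : Prop :=
  C ⊆ M.E ∧ ¬ M.Indep C ∧ ∀ D : Set α, D ⊂ C → M.Indep D

/-- Every finite dependent set contains a circuit. -/
lemma exists_circuit_of_dep {α : Type*} (M : Matroid α) :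
    ∀ n (T : Set α), T.ncard = n → T ⊆ M.E → T.Finite → ¬ M.Indep T →
      ∃ C ⊆ T, IsCircuitOf M C := by
  intro n
  induction n using Nat.strong_induction_on with
  | _ n ih =>
    rintro T rfl hTE hfin hdep
    by_cases h : ∀ D, D ⊂ T → M.Indep D
    · exact ⟨T, subset_rfl, hTE, hdep, h⟩
    · push_neg at h
      obtain ⟨D, hDT, hD⟩ := h
      obtain ⟨C, hCD, hC⟩ := ih D.ncard (Set.ncard_lt_ncard hDT hfin) D rfl
        (hDT.subset.trans hTE) (hfin.subset hDT.subset) hD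
      exact ⟨C, hCD.trans hDT.subset, hC⟩

/-- Every element of a circuit lies in the closure of the rest of the circuit. -/
lemma circuit_mem_closure_diff {α : Type*} {M : Matroid α} {C : Set α}
    (hC : IsCircuitOf M C) {x : α} (hx : x ∈ C) : x ∈ M.closure (C \ {x}) := by
  obtain ⟨hCE, hdep, hmin⟩ := hC
  have hI : M.Indep (C \ {x}) := hmin _ (sdiff_singleton_ssubset.mpr hx)
  have hxE : x ∈ M.E := hCE hx
  by_contra hcl
  have := (hI.insert_indep_iff_of_notMem (by simp)).mpr ⟨hxE, hcl⟩
  rw [insert_diff_singleton, insert_eq_of_mem hx] at this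
  exact hdep this

/-- Let `M` be a loopless matroid of finite rank on a linearly ordered type, `B` a base of
`M`, and `f` the map fixing `B` pointwise and sending each `x ∉ B` to the least element of
`B` lying in the fundamental circuit of `x` with respect to `B`.  Then the number of
distinct values of `f` on any set `S` of elements is at most the rank of `S`. -/
theorem stmt17 {α : Type*} [LinearOrder α] (M : Matroid α)
    (hloopless : ∀ x ∈ M.E, M.Indep {x}) (hfin : M.RankFinite)
    (B : Set α) (hB : M.IsBase B) (f : α → α)
    (hfB : ∀ x ∈ B, f x = x)
    (hfC : ∀ x ∈ M.E \ B, ∃ C : Set α, IsCircuitOf M C ∧ C ⊆ insert x B ∧ x ∈ C ∧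
      IsLeast (B ∩ C) (f x)) :
    ∀ S : Set α, S ⊆ M.E → (f '' S).encard ≤ mRank M S := by
  classical
  haveI := hfin
  intro S hSE
  -- Every element is in the closure of the B-elements ≥ its f-value.
  have hkey : ∀ x ∈ M.E, x ∈ M.closure (B ∩ Ici (f x)) := by
    intro x hx
    by_cases hxB : x ∈ B
    · have hx' : x ∈ B ∩ Ici (f x) := ⟨hxB, by rw [hfB x hxB]; exact le_refl x⟩
      exact M.subset_closure _ (inter_subset_left.trans hB.subset_ground) hx'
    · obtain ⟨C, hC, hCB, hxC, hleast⟩ := hfC x ⟨hx, hxB⟩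
      have h1 : C \ {x} ⊆ B ∩ Ici (f x) := by
        rintro y ⟨hyC, hyx⟩
        have hyB : y ∈ B := (hCB hyC).resolve_left (by simpa using hyx)
        exact ⟨hyB, hleast.2 ⟨hyB, hyC⟩⟩
      exact M.closure_subset_closure h1 (circuit_mem_closure_diff hC hxC)
  set V := f '' S with hV
  have hVB : V ⊆ B := by
    rintro _ ⟨x, hxS, rfl⟩
    by_cases hxB : x ∈ B
    · rw [hfB x hxB]; exact hxB
    · obtain ⟨C, hC, hCB, hxC, hleast⟩ := hfC x ⟨hSE hxS, hxB⟩
      exact hleast.1.1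
  have hVfin : V.Finite := hB.finite.subset hVB
  have hexists : ∀ v ∈ V, ∃ x, x ∈ S ∧ f x = v := fun v hv => hv
  choose! g hgS hgf using hexists
  set T := g '' V with hT
  have hginj : InjOn g V := fun u hu v hv h => by rw [← hgf u hu, ← hgf v hv, h]
  have hTS : T ⊆ S := by rintro _ ⟨v, hv, rfl⟩; exact hgS v hv
  have hTE : T ⊆ M.E := hTS.trans hSE
  have hTfin : T.Finite := hVfin.image g
  have hfinj : InjOn f T := by
    rintro _ ⟨u, hu, rfl⟩ _ ⟨w, hw, rfl⟩ h
    rw [hgf u hu, hgf w hw] at h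
    rw [h]
  have hTindep : M.Indep T := by
    by_contra hdep
    obtain ⟨C, hCT, hC⟩ := exists_circuit_of_dep M T.ncard T rfl hTE hTfin hdep
    have hCne : C.Nonempty :=
      nonempty_iff_ne_empty.mpr (fun h => hC.2.1 (h ▸ M.empty_indep))
    obtain ⟨x₀, hx₀C, hmin⟩ := Set.exists_min_image C f (hTfin.subset hCT) hCne
    set v := f x₀ with hv0
    have hx₀cl : x₀ ∈ M.closure (B \ {v}) := by
      have hsub : C \ {x₀} ⊆ M.closure (B ∩ Ioi v) := by
        rintro y ⟨hyC, hy0⟩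
        have hvy : v < f y :=
          lt_of_le_of_ne (hmin y hyC)
            (fun h => (by simpa using hy0 : ¬ y = x₀) (hfinj (hCT hyC) (hCT hx₀C) h.symm))
        refine M.closure_subset_closure ?_ (hkey y (hTE (hCT hyC)))
        exact fun b hb => ⟨hb.1, lt_of_lt_of_le hvy hb.2⟩
      have h1 : x₀ ∈ M.closure (C \ {x₀}) := circuit_mem_closure_diff hC hx₀C
      have h2 := M.closure_subset_closure_of_subset_closure hsub
      have h3 : B ∩ Ioi v ⊆ B \ {v} := fun b hb => ⟨hb.1, ne_of_gt hb.2⟩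
      exact M.closure_subset_closure h3 (h2 h1)
    by_cases hx₀B : x₀ ∈ B
    · have hvx : v = x₀ := hfB x₀ hx₀B
      exact hB.indep.notMem_closure_sdiff_of_mem hx₀B (hvx ▸ hx₀cl)
    · obtain ⟨C₀, hC₀, hC₀B, hx₀C₀, hleast⟩ := hfC x₀ ⟨hTE (hCT hx₀C), hx₀B⟩
      have hvC₀ : v ∈ B ∩ C₀ := hleast.1
      have h4 : C₀ \ {v} ⊆ insert x₀ (B \ {v}) := by
        rintro y ⟨hyC₀, hyv⟩
        rcases hC₀B hyC₀ with rfl | hyB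
        · exact mem_insert _ _
        · exact mem_insert_of_mem _ ⟨hyB, hyv⟩
      have h5 : v ∈ M.closure (insert x₀ (B \ {v})) :=
        M.closure_subset_closure h4 (circuit_mem_closure_diff hC₀ hvC₀.2)
      rw [Matroid.closure_insert_eq_of_mem_closure hx₀cl] at h5
      exact hB.indep.notMem_closure_sdiff_of_mem hvC₀.1 h5
  have hcard : V.encard = T.encard := hginj.encard_image.symm
  calc (f '' S).encard = T.encard := hcard
    _ ≤ ⨆ I ∈ {I : Set α | M.Indep I ∧ I ⊆ S}, I.encard :=
        le_biSup _ (⟨hTindep, hTS⟩ : T ∈ {I : Set α | M.Indep I ∧ I ⊆ S})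
    _ = mRank M S := rfl
end

section
/- There exists a constant C > 0 such that for every n ≥ 2 and every loopless 𝔽₂-representable matroid M of rank n, there exist a nonempty finite index set I and maps f_i from the ground set of M to Fin n, for i ∈ I, such that: (i) for every i ∈ I and every set S of elements of M, the number of distinct values of f_i on S is at most the rank of S in M; and (ii) for every set S of elements of M, the average (1/|I|)·Σ_{i ∈ I} (number of distinct values of f_i on S) is at least (log₂ n / (C·n)) · rank_M(S). In other words, every loopless binary matroid of rank n admits an O(n/log n)-approximate randomized embedding into the free matroid on n elements. -/
open Set Finset


lemma sum_range_two_pow (m : ℕ) : ∑ i ∈ Finset.range m, 2 ^ i = 2 ^ m - 1 := by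
  induction m with
  | zero => simp
  | succ m ih =>
    rw [Finset.sum_range_succ, ih]
    have : 1 ≤ 2 ^ m := Nat.one_le_two_pow
    omega

/-- numeric value of an F2 vector -/
def vval {t : ℕ} (v : Fin t → ZMod 2) : ℕ := ∑ i, (v i).val * 2 ^ (i : ℕ)

lemma zmod2_val_one {x : ZMod 2} (hx : x ≠ 0) : x.val = 1 := by
  have h1 : x.val < 2 := ZMod.val_lt x
  have h2 : x.val ≠ 0 := fun h => hx ((ZMod.val_eq_zero x).1 h)
  omega

lemma vval_lt {t : ℕ} (v : Fin t → ZMod 2) : vval v < 2 ^ t := by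
  have h : vval v ≤ ∑ i : Fin t, 1 * 2 ^ (i : ℕ) := by
    apply Finset.sum_le_sum
    intro i _
    have : (v i).val ≤ 1 := by have := ZMod.val_lt (v i); omega
    exact Nat.mul_le_mul_right _ this
  have h2 : ∑ i : Fin t, 1 * 2 ^ (i : ℕ) = 2 ^ t - 1 := by
    simp only [one_mul]
    rw [Fin.sum_univ_eq_sum_range (fun i => 2 ^ i), sum_range_two_pow]
  have : 1 ≤ 2 ^ t := Nat.one_le_two_pow
  omega

lemma vval_le_of_ne_zero {t : ℕ} {v : Fin t → ZMod 2} {j : Fin t} (h : v j ≠ 0) :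
    2 ^ (j : ℕ) ≤ vval v := by
  have h1 := Finset.single_le_sum (f := fun i : Fin t => (v i).val * 2 ^ (i : ℕ))
    (fun i _ => Nat.zero_le _) (Finset.mem_univ j)
  rw [zmod2_val_one h, one_mul] at h1
  exact h1

lemma vval_eq_zero_iff {t : ℕ} (v : Fin t → ZMod 2) : vval v = 0 ↔ v = 0 := by
  constructor
  · intro h
    funext j
    by_contra hj
    have h1 := vval_le_of_ne_zero hj
    have h2 : 0 < 2 ^ (j : ℕ) := Nat.pow_pos (by norm_num)
    simp only [Pi.zero_apply] at hj
    omega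
  · intro h; subst h; simp [vval]

/-- if the top bit (log) position of `vval v` is `j`, then `v` is nonzero at `j` -/
lemma vval_top_bit {t : ℕ} {v : Fin t → ZMod 2} (hv : vval v ≠ 0) {j : Fin t}
    (hj : Nat.log 2 (vval v) = (j : ℕ)) : v j ≠ 0 := by
  intro h0
  have hge : 2 ^ (j : ℕ) ≤ vval v := by
    have := Nat.pow_log_le_self 2 hv
    rwa [hj] at this
  have hsmall : ∀ i : Fin t, v i ≠ 0 → (i : ℕ) < (j : ℕ) := by
    intro i hi
    have h1 : 2 ^ (i : ℕ) ≤ vval v := vval_le_of_ne_zero hi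
    have hlt : vval v < 2 ^ ((j : ℕ) + 1) := by
      have := Nat.lt_pow_succ_log_self (by norm_num : 1 < 2) (vval v)
      rwa [hj] at this
    have h2 : (i : ℕ) < (j : ℕ) + 1 := by
      by_contra hc
      push_neg at hc
      have : 2 ^ ((j : ℕ) + 1) ≤ 2 ^ (i : ℕ) := Nat.pow_le_pow_right (by norm_num) hc
      omega
    have h3 : (i : ℕ) ≠ (j : ℕ) := by
      intro he
      exact hi (by rw [Fin.ext he]; exact h0)
    omega
  have hb : vval v ≤ ∑ i : Fin t, (if (i : ℕ) < (j : ℕ) then 2 ^ (i : ℕ) else 0) := by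
    apply Finset.sum_le_sum
    intro i _
    by_cases hi : v i = 0
    · simp [hi]
    · rw [zmod2_val_one hi, one_mul, if_pos (hsmall i hi)]
  have hb2 : ∑ i : Fin t, (if (i : ℕ) < (j : ℕ) then 2 ^ (i : ℕ) else 0) < 2 ^ (j : ℕ) := by
    calc ∑ i : Fin t, (if (i : ℕ) < (j : ℕ) then 2 ^ (i : ℕ) else 0)
        ≤ ∑ i ∈ Finset.range (j : ℕ), 2 ^ i := by
          rw [Fin.sum_univ_eq_sum_range (fun i => if i < (j : ℕ) then 2 ^ i else 0),
            ← Finset.sum_filter]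
          apply Finset.sum_le_sum_of_subset
          intro i hi
          simp only [Finset.mem_filter, Finset.mem_range] at hi ⊢
          exact hi.2
      _ < 2 ^ (j : ℕ) := by
          rw [sum_range_two_pow]
          have : 1 ≤ 2 ^ (j:ℕ) := Nat.one_le_two_pow
          omega
  omega
/-- vectors whose images under L have injective top-bit-values are linearly independent -/
lemma key_indep {m t : ℕ} (L : Matrix (Fin t) (Fin m) (ZMod 2)) {β : Type*}
    (u : β → (Fin m → ZMod 2)) (h0 : ∀ b, u b ≠ 0)
    (hinj : Function.Injective fun b => Nat.log 2 (vval (L.mulVec (u b)))) :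
    LinearIndependent (ZMod 2) u := by
  classical
  rw [linearIndependent_iff'']
  suffices H : ∀ N (s : Finset β), s.card ≤ N → ∀ g : β → ZMod 2, (∀ i ∉ s, g i = 0) →
      ∑ i ∈ s, g i • u i = 0 → ∀ i, g i = 0 by
    intro s g hg hsum i
    exact H s.card s le_rfl g hg hsum i
  intro N
  induction N with
  | zero =>
    intro s hcard g hg _ i
    have : s = ∅ := Finset.card_eq_zero.1 (Nat.le_zero.1 hcard)
    exact hg i (by simp [this])
  | succ N ih =>
    intro s hcard g hg hsum i
    rcases Finset.eq_empty_or_nonempty s with hs | hs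
    · exact hg i (by simp [hs])
    obtain ⟨i₀, hi₀s, hi₀max⟩ := Finset.exists_max_image s
      (fun b => Nat.log 2 (vval (L.mulVec (u b)))) hs

    -- first: g i₀ = 0
    have hgi₀ : g i₀ = 0 := by
      by_cases hz : vval (L.mulVec (u i₀)) = 0
      · have hv0 : Nat.log 2 (vval (L.mulVec (u i₀))) = 0 := by simp [hz]
        have hsing : s = {i₀} := by
          apply Finset.eq_singleton_iff_unique_mem.2
          refine ⟨hi₀s, fun b hb => ?_⟩
          apply hinj
          have h1 := hi₀max b hb
          simp only
          omega
        rw [hsing, Finset.sum_singleton] at hsum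
        rcases smul_eq_zero.1 hsum with h | h
        · exact h
        · exact absurd h (h0 i₀)
      · have hjlt : Nat.log 2 (vval (L.mulVec (u i₀))) < t :=
          (Nat.log_lt_iff_lt_pow (by norm_num) hz).2 (vval_lt (L.mulVec (u i₀)))
        have htop : L.mulVec (u i₀) ⟨Nat.log 2 (vval (L.mulVec (u i₀))), hjlt⟩ ≠ 0 :=
          vval_top_bit hz rfl
        have hothers : ∀ b ∈ s, b ≠ i₀ →
            L.mulVec (u b) ⟨Nat.log 2 (vval (L.mulVec (u i₀))), hjlt⟩ = 0 := by
          intro b hb hbne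
          by_contra hc
          have h1 : 2 ^ (Nat.log 2 (vval (L.mulVec (u i₀)))) ≤ vval (L.mulVec (u b)) :=
            vval_le_of_ne_zero hc
          have h2 : Nat.log 2 (vval (L.mulVec (u b))) < Nat.log 2 (vval (L.mulVec (u i₀))) := by
            have hle := hi₀max b hb
            have hne : Nat.log 2 (vval (L.mulVec (u b))) ≠ Nat.log 2 (vval (L.mulVec (u i₀))) :=
              fun he => hbne (hinj he)
            omega
          have h3 : vval (L.mulVec (u b)) < 2 ^ (Nat.log 2 (vval (L.mulVec (u i₀)))) := by
            by_cases hzb : vval (L.mulVec (u b)) = 0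
            · rw [hzb]; exact Nat.pow_pos (by norm_num)
            · exact (Nat.log_lt_iff_lt_pow (by norm_num) hzb).1 h2
          omega
        have happ : ∑ b ∈ s, g b • L.mulVec (u b) = 0 := by
          have h1 := congrArg (fun w => L.mulVecLin w) hsum
          simpa [map_sum, Matrix.mulVecLin_apply] using h1
        have heval : ∑ b ∈ s, g b * L.mulVec (u b) ⟨Nat.log 2 (vval (L.mulVec (u i₀))), hjlt⟩
            = 0 := by
          have h1 := congrFun happ ⟨Nat.log 2 (vval (L.mulVec (u i₀))), hjlt⟩
          simpa using h1
        rw [← Finset.add_sum_erase _ _ hi₀s] at heval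
        have hrest : ∑ b ∈ s.erase i₀,
            g b * L.mulVec (u b) ⟨Nat.log 2 (vval (L.mulVec (u i₀))), hjlt⟩ = 0 := by
          apply Finset.sum_eq_zero
          intro b hb
          rw [hothers b (Finset.mem_of_mem_erase hb) (Finset.ne_of_mem_erase hb), mul_zero]
        rw [hrest, add_zero] at heval
        rcases mul_eq_zero.1 heval with h | h
        · exact h
        · exact absurd h htop
    have hsum' : ∑ b ∈ s.erase i₀, (fun b => if b = i₀ then 0 else g b) b • u b = 0 := by
      have h1 : ∑ b ∈ s.erase i₀, g b • u b = 0 := by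
        rw [← Finset.add_sum_erase _ _ hi₀s, hgi₀, zero_smul, zero_add] at hsum
        exact hsum
      rw [← h1]
      apply Finset.sum_congr rfl
      intro b hb
      simp only [if_neg (Finset.ne_of_mem_erase hb)]
    have hcard' : (s.erase i₀).card ≤ N := by
      have := Finset.card_erase_of_mem hi₀s
      omega
    have hg' : ∀ b ∉ s.erase i₀, (fun b => if b = i₀ then 0 else g b) b = 0 := by
      intro b hb
      by_cases hbe : b = i₀
      · simp [hbe]
      · simp only [if_neg hbe]
        apply hg
        intro hbs
        exact hb (Finset.mem_erase.2 ⟨hbe, hbs⟩)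
    have hall := ih (s.erase i₀) hcard' _ hg' hsum'
    by_cases hie : i = i₀
    · rw [hie]; exact hgi₀
    · have h2 := hall i
      rwa [if_neg hie] at h2
/-- sum of g ∘ T over a finite group, for T a surjective additive hom -/
lemma sum_comp_surj_addhom {A B : Type*} [Fintype A] [Fintype B] [DecidableEq B]
    [AddCommGroup A] [AddCommGroup B] (T : A →+ B) (hT : Function.Surjective T)
    (g : B → ℕ) : (∑ a : A, g (T a)) * Fintype.card B = Fintype.card A * ∑ b : B, g b := by
  classical
  -- fibers all have the same cardinality c
  have hfib : ∀ b : B, (Finset.univ.filter (fun a : A => T a = b)).card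
      = (Finset.univ.filter (fun a : A => T a = 0)).card := by
    intro b
    obtain ⟨a₀, ha₀⟩ := hT b
    apply Finset.card_bij (fun a _ => a - a₀)
    · intro a ha
      simp only [Finset.mem_filter, Finset.mem_univ, true_and] at ha ⊢
      rw [map_sub, ha, ha₀, sub_self]
    · intro a ha a' ha' h
      exact sub_left_injective h
    · intro a ha
      simp only [Finset.mem_filter, Finset.mem_univ, true_and] at ha
      refine ⟨a + a₀, ?_, by abel⟩
      simp only [Finset.mem_filter, Finset.mem_univ, true_and, map_add, ha, ha₀, zero_add]
  set c := (Finset.univ.filter (fun a : A => T a = 0)).card with hc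
  have h1 : ∑ a : A, g (T a) = c * ∑ b : B, g b := by
    rw [Finset.sum_comp (s := Finset.univ) g (fun a => T a)]
    have himg : Finset.univ.image (fun a : A => T a) = Finset.univ := by
      apply Finset.eq_univ_of_forall
      intro b
      obtain ⟨a, ha⟩ := hT b
      exact Finset.mem_image.2 ⟨a, Finset.mem_univ a, ha⟩
    rw [himg, Finset.mul_sum]
    apply Finset.sum_congr rfl
    intro b _
    rw [hfib b, smul_eq_mul]
  have h2 : Fintype.card A = c * Fintype.card B := by
    have := Finset.card_eq_sum_card_fiberwise
      (f := fun a : A => T a) (s := Finset.univ) (t := Finset.univ)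
      (fun a _ => Finset.mem_univ _)
    rw [Finset.card_univ] at this
    rw [this]
    rw [Finset.sum_congr rfl (fun b _ => hfib b)]
    rw [Finset.sum_const, Finset.card_univ, smul_eq_mul, mul_comm]
  rw [h1, h2]
  ring

/-- surjectivity of L ↦ (L.mulVec (v i))ᵢ for linearly independent v -/
lemma mulVec_family_surjective {K : Type*} [Field K] [Fintype K] [DecidableEq K]
    {m t r : ℕ} {v : Fin r → (Fin m → K)} (hv : LinearIndependent K v) :
    Function.Surjective (fun (L : Matrix (Fin t) (Fin m) K) (i : Fin r) => L.mulVec (v i)) := by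
  intro w
  obtain ⟨q, hq⟩ := Submodule.exists_isCompl (Submodule.span K (Set.range v))
  set π := (Submodule.span K (Set.range v)).projectionOnto q hq
  set bs := Module.Basis.span hv
  set u : (Fin m → K) →ₗ[K] (Fin t → K) := ((bs.constr K w).comp π)
  refine ⟨LinearMap.toMatrix' u, ?_⟩
  funext i
  show (LinearMap.toMatrix' u).mulVec (v i) = w i
  have h1 : (LinearMap.toMatrix' u).mulVec (v i) = u (v i) := by
    rw [← Matrix.toLin'_apply, Matrix.toLin'_toMatrix']
  rw [h1]
  have h2 : π (v i) = bs i := by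
    have hmem : v i ∈ Submodule.span K (Set.range v) :=
      Submodule.subset_span (Set.mem_range_self i)
    have h3 : v i = ((bs i : Submodule.span K (Set.range v)) : Fin m → K) := by
      rw [Module.Basis.span_apply]
    calc π (v i) = π ((bs i : Submodule.span K (Set.range v)) : Fin m → K) := by rw [← h3]
      _ = bs i := Submodule.projectionOnto_apply_left hq (bs i)
  show (bs.constr K w) (π (v i)) = w i
  rw [h2, Module.Basis.constr_basis]

lemma vval_eq_equiv {t : ℕ} (v : Fin t → ZMod 2) :
    vval v = ((finFunctionFinEquiv (m := 2) (n := t) v : Fin (2 ^ t)) : ℕ) := by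
  rfl

lemma vval_injective {t : ℕ} : Function.Injective (vval (t := t)) := by
  intro u u' h
  rw [vval_eq_equiv, vval_eq_equiv] at h
  exact finFunctionFinEquiv.injective (Fin.val_injective h)

lemma vval_surj {t : ℕ} {b : ℕ} (hb : b < 2 ^ t) : ∃ u : Fin t → ZMod 2, vval u = b := by
  refine ⟨finFunctionFinEquiv.symm ⟨b, hb⟩, ?_⟩
  exact (vval_eq_equiv _).trans (congrArg Fin.val (Equiv.apply_symm_apply _ _))

/-- number of vectors with given top-bit position -/
lemma card_top_bit {t : ℕ} (j : ℕ) (hj : j < t) :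
    (Finset.univ.filter (fun u : Fin t → ZMod 2 => u ≠ 0 ∧ Nat.log 2 (vval u) = j)).card
    = 2 ^ j := by
  classical
  have h2j : (Finset.Ico (2^j) (2^(j+1))).card = 2 ^ j := by
    rw [Nat.card_Ico]
    have : (2:ℕ)^(j+1) = 2 * 2^j := by ring
    omega
  rw [← h2j]
  apply Finset.card_bij (fun u _ => vval u)
  · intro u hu
    simp only [Finset.mem_filter, Finset.mem_univ, true_and] at hu
    have hne : vval u ≠ 0 := fun h => hu.1 ((vval_eq_zero_iff u).1 h)
    have := (Nat.log_eq_iff (Or.inr ⟨by norm_num, hne⟩)).1 hu.2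
    simp only [Finset.mem_Ico]
    exact this
  · intro u hu u' hu' h
    exact vval_injective h
  · intro b hb
    simp only [Finset.mem_Ico] at hb
    have hblt : b < 2 ^ t := by
      have h1 : (2:ℕ)^(j+1) ≤ 2^t := Nat.pow_le_pow_right (by norm_num) hj
      omega
    obtain ⟨u, hu⟩ := vval_surj hblt
    have hbne : b ≠ 0 := by
      have : 0 < 2^j := Nat.pow_pos (by norm_num)
      omega
    refine ⟨u, ?_, hu⟩
    simp only [Finset.mem_filter, Finset.mem_univ, true_and]
    constructor
    · intro h0
      rw [h0] at hu
      rw [(vval_eq_zero_iff 0).2 rfl] at hu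
      exact hbne hu.symm
    · rw [hu]
      exact (Nat.log_eq_iff (Or.inr ⟨by norm_num, hbne⟩)).2 ⟨hb.1, hb.2⟩

/-- counting tuples all of whose coordinates satisfy p -/
lemma card_tuple_forall {r : ℕ} {V : Type*} [Fintype V] [DecidableEq V] (p : V → Prop)
    [DecidablePred p] :
    (Finset.univ.filter (fun w : Fin r → V => ∀ i, p (w i))).card
    = (Finset.univ.filter p).card ^ r := by
  classical
  rw [← Fintype.card_subtype, ← Fintype.card_subtype]
  rw [Fintype.card_congr (Equiv.subtypePiEquivPi (p := fun _ : Fin r => p))]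
  rw [Fintype.card_pi]
  simp [Finset.prod_const, Finset.card_univ]

lemma cnt_eq {t r : ℕ} (j : ℕ) (hj : j < t) :
    (Finset.univ.filter (fun w : Fin r → Fin t → ZMod 2 =>
      ∃ i, w i ≠ 0 ∧ Nat.log 2 (vval (w i)) = j)).card
    = (2^t)^r - (2^t - 2^j)^r := by
  classical
  have hcompl := Finset.card_filter_add_card_filter_not
    (s := (Finset.univ : Finset (Fin r → Fin t → ZMod 2)))
    (p := fun w => ∃ i, w i ≠ 0 ∧ Nat.log 2 (vval (w i)) = j)
  have hneg : (Finset.univ.filter (fun w : Fin r → Fin t → ZMod 2 =>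
      ¬ ∃ i, w i ≠ 0 ∧ Nat.log 2 (vval (w i)) = j)).card = (2^t - 2^j)^r := by
    have heq : (Finset.univ.filter (fun w : Fin r → Fin t → ZMod 2 =>
        ¬ ∃ i, w i ≠ 0 ∧ Nat.log 2 (vval (w i)) = j)).card
        = (Finset.univ.filter (fun w : Fin r → Fin t → ZMod 2 =>
          ∀ i, ¬ (w i ≠ 0 ∧ Nat.log 2 (vval (w i)) = j))).card := by
      congr 1
      apply Finset.filter_congr
      intro w _
      push_neg
      constructor
      · intro h i hi; exact h i hi
      · intro h i hi; exact h i hi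
    rw [heq, card_tuple_forall (fun u : Fin t → ZMod 2 => ¬ (u ≠ 0 ∧ Nat.log 2 (vval u) = j))]
    congr 1
    have := Finset.card_filter_add_card_filter_not
      (s := (Finset.univ : Finset (Fin t → ZMod 2)))
      (p := fun u => u ≠ 0 ∧ Nat.log 2 (vval u) = j)
    have hcard : (Finset.univ : Finset (Fin t → ZMod 2)).card = 2 ^ t := by
      rw [Finset.card_univ, Fintype.card_fun]
      simp [ZMod.card]
    rw [card_top_bit j hj, hcard] at this
    rw [add_comm] at this
    exact Nat.eq_sub_of_add_eq this
  have hcard : (Finset.univ : Finset (Fin r → Fin t → ZMod 2)).card = (2^t)^r := by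
    rw [Finset.card_univ, Fintype.card_fun]
    have h1 : Fintype.card (Fin t → ZMod 2) = 2 ^ t := by
      rw [Fintype.card_fun]; simp [ZMod.card]
    rw [h1]
    simp
  rw [hcard, hneg] at hcompl
  exact Nat.eq_sub_of_add_eq hcompl

/-- two-term binomial bound -/
lemma binom2 (a : ℕ) : ∀ k, 1 ≤ k → a^k + k * a^(k-1) ≤ (a+1)^k := by
  intro k
  induction k with
  | zero => omega
  | succ k ih =>
    intro _
    rcases Nat.eq_zero_or_pos k with h | hk
    · subst h
      simp
    · have h1 := ih hk
      have h3 : (a^k + k * a^(k-1)) * (a+1) ≤ (a+1)^k * (a+1) :=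
        Nat.mul_le_mul_right _ h1
      have h4 : a^(k-1) * a = a^k := by
        rw [← pow_succ]
        congr 1
        omega
      have h5 : (a+1)^(k+1) = (a+1)^k * (a+1) := by ring
      have h6 : a^k * a = a^(k+1) := by rw [← pow_succ]
      calc a^(k+1) + (k+1) * a^k
          = a^k * a + k * a^k + a^k := by rw [h6]; ring
        _ ≤ a^k * a + a^k + (k * (a^(k-1) * a) + k * a^(k-1)) := by
            rw [h4]; omega
        _ = (a^k + k * a^(k-1)) * (a+1) := by ring
        _ ≤ (a+1)^(k+1) := by rw [h5]; exact h3

/-- Bernoulli-type bound in ℕ: if q ≤ r (or q ≤ 2), then 2(q-1)^r ≤ q^r -/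
lemma nat_bern {q r : ℕ} (hr : 1 ≤ r) (h : q ≤ r ∨ q ≤ 2) : 2 * (q-1)^r ≤ q^r := by
  rcases Nat.lt_or_ge q 2 with hq | hq
  · have hq0 : q - 1 = 0 := by omega
    rw [hq0, Nat.zero_pow (by omega : 0 < r), mul_zero]
    exact Nat.zero_le _
  rcases Nat.eq_or_lt_of_le hq with hq2 | hq3
  · -- q = 2
    rw [← hq2]
    simp only [show (2:ℕ) - 1 = 1 from rfl, one_pow, mul_one]
    calc (2:ℕ) = 2^1 := by norm_num
      _ ≤ 2^r := Nat.pow_le_pow_right (by norm_num) hr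
  · -- q ≥ 3, so q ≤ r
    have hqr : q ≤ r := by
      rcases h with h | h
      · exact h
      · omega
    have ha : q - 1 ≥ 1 := by omega
    -- step 1 : 2 (q-1)^q ≤ q^q
    have step1 : 2 * (q-1)^q ≤ q^q := by
      have hb := binom2 (q-1) q (by omega)
      have hq1 : q - 1 + 1 = q := by omega
      rw [hq1] at hb
      have h2 : (q-1) * (q-1)^(q-1) ≤ q * (q-1)^(q-1) :=
        Nat.mul_le_mul_right _ (by omega)
      have h3 : (q-1) * (q-1)^(q-1) = (q-1)^q := by
        rw [← pow_succ' (q-1) (q-1), hq1]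
      omega
    -- step 2 : extend to r ≥ q
    have hsplit : (q-1)^r = (q-1)^q * (q-1)^(r-q) := by
      rw [← pow_add]
      congr 1
      omega
    have hsplit2 : q^r = q^q * q^(r-q) := by
      rw [← pow_add]
      congr 1
      omega
    rw [hsplit, hsplit2, ← mul_assoc]
    calc 2 * (q-1)^q * (q-1)^(r-q) ≤ q^q * (q-1)^(r-q) := Nat.mul_le_mul_right _ step1
      _ ≤ q^q * q^(r-q) := Nat.mul_le_mul_left _ (Nat.pow_le_pow_left (by omega) _)

/-- the key arithmetic inequality -/
lemma f4_arith {a t r n : ℕ} (ht : 1 ≤ t) (hr : 1 ≤ r) (hrn : r ≤ n) (htn : 2^t ≤ n)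
    (hra : r < 2^(a+1)) : 4 * t * r ≤ max 1 (min a t) * (16 * n) := by
  rcases le_or_gt t a with hat | hat
  · -- min = t, max 1 t = t
    rw [min_eq_right hat, max_eq_right ht]
    calc 4 * t * r ≤ 4 * t * n := Nat.mul_le_mul_left _ hrn
      _ ≤ t * (16 * n) := by ring_nf; nlinarith
  · -- a < t
    rw [min_eq_left (by omega : a ≤ t)]
    set d := t - a with hd
    have hd1 : 1 ≤ d := by omega
    have htad : t = a + d := by omega
    have hpow : (2:ℕ)^t = 2^a * 2^d := by rw [htad, pow_add]
    have h2d : d < 2^d := Nat.lt_two_pow_self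
    have hM1 : 1 ≤ max 1 a := le_max_left _ _
    have hMa : a ≤ max 1 a := le_max_right _ _
    -- t ≤ 2 * max 1 a * 2^d
    have hkey : t ≤ 2 * (max 1 a) * 2^d := by
      have h1 : a + d ≤ 2 * (max 1 a) + 2 * (max 1 a) * d := by nlinarith
      calc t = a + d := htad
        _ ≤ 2 * (max 1 a) + 2 * (max 1 a) * d := h1
        _ ≤ 2 * (max 1 a) * 2^d := by nlinarith
    calc 4 * t * r ≤ 4 * t * 2^(a+1) := by
          apply Nat.mul_le_mul_left
          omega
      _ = 8 * 2^a * t := by rw [pow_succ]; ring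
      _ ≤ 8 * 2^a * (2 * (max 1 a) * 2^d) := Nat.mul_le_mul_left _ hkey
      _ = (max 1 a) * (16 * (2^a * 2^d)) := by ring
      _ = (max 1 a) * (16 * 2^t) := by rw [hpow]
      _ ≤ (max 1 a) * (16 * n) := by
          apply Nat.mul_le_mul_left
          apply Nat.mul_le_mul_left
          exact htn
lemma mRank_le_of {α : Type*} {M : Matroid α} {S I : Set α} (hI : M.Indep I) (hIS : I ⊆ S) :
    I.encard ≤ mRank M S :=
  le_iSup₂ (f := fun (I : Set α) (_ : I ∈ {I : Set α | M.Indep I ∧ I ⊆ S}) => I.encard)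
    I ⟨hI, hIS⟩

lemma mRank_mono_ground {α : Type*} {M : Matroid α} {S : Set α} :
    mRank M S ≤ mRank M M.E :=
  iSup₂_le fun I hI => mRank_le_of hI.1 hI.1.subset_ground

lemma mRank_attained {α : Type*} {M : Matroid α} {S : Set α} (h : mRank M S ≠ ⊤) :
    ∃ I, M.Indep I ∧ I ⊆ S ∧ I.encard = mRank M S := by
  set N := (mRank M S).toNat with hNdef
  have hN : mRank M S = (N : ℕ∞) := (ENat.coe_toNat h).symm
  rcases Nat.eq_zero_or_pos N with h0 | hpos
  · refine ⟨∅, M.empty_indep, empty_subset _, ?_⟩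
    rw [Set.encard_empty, hN, h0]
    rfl
  · have hlt : ((N - 1 : ℕ) : ℕ∞) < mRank M S := by
      rw [hN]
      exact_mod_cast Nat.sub_lt hpos one_pos
    rw [mRank, lt_iSup_iff] at hlt
    obtain ⟨I, hlt⟩ := hlt
    rw [lt_iSup_iff] at hlt
    obtain ⟨hmem, hlt⟩ := hlt
    refine ⟨I, hmem.1, hmem.2, ?_⟩
    have hle : I.encard ≤ mRank M S := mRank_le_of hmem.1 hmem.2
    have hge : (N : ℕ∞) ≤ I.encard := by
      have h1 : ((N - 1 : ℕ) : ℕ∞) + 1 ≤ I.encard := Order.add_one_le_of_lt hlt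
      have h2 : ((N - 1 : ℕ) : ℕ∞) + 1 = (N : ℕ∞) := by
        have h3 : ((N - 1 : ℕ) : ℕ∞) + ((1:ℕ) : ℕ∞) = (((N-1) + 1 : ℕ) : ℕ∞) := by
          exact_mod_cast rfl
        rw [show ((1:ℕ∞)) = ((1:ℕ):ℕ∞) from rfl, h3]
        congr 1
        omega
      rwa [h2] at h1
    rw [hN]
    exact le_antisymm (hN ▸ hle) hge

/-- A matroid is representable over a field `K` if independence coincides with
`K`-linear independence of an assignment of vectors to the elements. -/
def RepOver (K : Type*) [Field K] {α : Type*} (M : Matroid α) : Prop :=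
  ∃ (ι : Type) (f : α → ι → K), ∀ I : Set α,
    M.Indep I ↔ I ⊆ M.E ∧ LinearIndependent K (fun x : I => f (x : α))

lemma F3_main {t r : ℕ} (ht1 : 1 ≤ t) (hr1 : 1 ≤ r) :
    (max 1 (min (Nat.log 2 r) t)) * (2^t)^r
      ≤ 2 * ∑ j ∈ Finset.range t, ((2^t)^r - (2^t - 2^j)^r) := by
  set a := Nat.log 2 r with ha
  set s' := max 1 (min a t) with hs'
  have hs't : s' ≤ t := max_le ht1 (min_le_right a t)
  have hgood : ∀ j ∈ Finset.Ico (t - s') t, (2^t)^r ≤ 2 * ((2^t)^r - (2^t - 2^j)^r) := by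
    intro j hj
    simp only [Finset.mem_Ico] at hj
    have hjt : j < t := hj.2
    have htj1 : 1 ≤ t - j := by omega
    have htjs : t - j ≤ s' := by omega
    have hqK : 2^t - 2^j = 2^j * (2^(t-j) - 1) := by
      rw [Nat.mul_sub, mul_one, ← pow_add]
      congr 2
      omega
    have hqr : 2^(t-j) ≤ r ∨ 2^(t-j) ≤ 2 := by
      by_cases hc : min a t = 0
      · right
        have hs'1 : s' = 1 := by omega
        calc (2:ℕ)^(t-j) ≤ 2^1 := Nat.pow_le_pow_right (by norm_num) (by omega)
          _ = 2 := by norm_num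
      · left
        have hs'min : s' = min a t := by omega
        have hja : t - j ≤ a := by omega
        calc (2:ℕ)^(t-j) ≤ 2^a := Nat.pow_le_pow_right (by norm_num) hja
          _ ≤ r := by rw [ha]; exact Nat.pow_log_le_self 2 (by omega)
    have hbern := nat_bern hr1 hqr
    have hsplit : (2:ℕ)^t = 2^j * 2^(t-j) := by rw [← pow_add]; congr 1; omega
    have h2 : 2 * (2^t - 2^j)^r ≤ (2^t)^r := by
      rw [hqK, mul_pow]
      conv_rhs => rw [hsplit, mul_pow]
      calc 2 * ((2^j)^r * (2^(t-j)-1)^r) = (2^j)^r * (2 * (2^(t-j)-1)^r) := by ring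
        _ ≤ (2^j)^r * (2^(t-j))^r := Nat.mul_le_mul_left _ hbern
    have h3 : (2^t - 2^j)^r ≤ (2^t)^r := Nat.pow_le_pow_left (Nat.sub_le _ _) _
    omega
  calc s' * (2^t)^r = ∑ _j ∈ Finset.Ico (t - s') t, (2^t)^r := by
        rw [Finset.sum_const, Nat.card_Ico, smul_eq_mul]
        congr 1
        omega
    _ ≤ ∑ j ∈ Finset.Ico (t - s') t, 2 * ((2^t)^r - (2^t - 2^j)^r) :=
        Finset.sum_le_sum hgood
    _ = 2 * ∑ j ∈ Finset.Ico (t - s') t, ((2^t)^r - (2^t - 2^j)^r) := by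
        rw [Finset.mul_sum]
    _ ≤ 2 * ∑ j ∈ Finset.range t, ((2^t)^r - (2^t - 2^j)^r) := by
        apply Nat.mul_le_mul_left
        apply Finset.sum_le_sum_of_subset
        intro j hj
        simp only [Finset.mem_Ico, Finset.mem_range] at hj ⊢
        omega

set_option maxHeartbeats 2000000 in
/-- There is a constant `C > 0` such that every loopless `𝔽₂`-representable matroid `M` of
rank `n ≥ 2` admits an `O(n / log n)`-approximate randomized embedding into the free matroid
on `n` elements: a nonempty finite family of maps `f i : α → Fin n` such that (i) for every
`i` and every set `S` of elements, the number of distinct values of `f i` on `S` is at most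
the rank of `S`, and (ii) for every set `S` of elements the average over `i` of the number
of distinct values of `f i` on `S` is at least `(log₂ n / (C n)) · rank S`. -/
theorem stmt19 : ∃ C : ℝ, 0 < C ∧ ∀ n : ℕ, 2 ≤ n → ∀ (α : Type*) (M : Matroid α),
    (∀ x ∈ M.E, M.Indep {x}) → RepOver (ZMod 2) M → mRank M M.E = (n : ℕ∞) →
    ∃ k : ℕ, 0 < k ∧ ∃ f : Fin k → (α → Fin n),
      (∀ (i : Fin k) (S : Set α), S ⊆ M.E → ((f i '' S).encard ≤ mRank M S)) ∧
      (∀ S : Set α, S ⊆ M.E →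
        Real.logb 2 n / (C * n) * ((mRank M S).toNat : ℝ) ≤
          (∑ i : Fin k, ((f i '' S).ncard : ℝ)) / (k : ℝ)) := by
  classical
  refine ⟨16, by norm_num, ?_⟩
  intro n hn α M hloop hrep hrank
  obtain ⟨ι, φ, hφ⟩ := hrep
  have npos : 0 < n := by omega
  -- upper bound on independent sets
  have hindep_le : ∀ I : Set α, M.Indep I → I.encard ≤ (n : ℕ∞) := by
    intro I hI
    rw [← hrank]
    exact mRank_le_of hI hI.subset_ground
  -- Step A: find a finite/basis representation ψ : α → (Fin m → ZMod 2)
  obtain ⟨b, hbsub, hbspan, hbli⟩ := exists_linearIndependent (ZMod 2) (φ '' M.E)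
  have hbfin : b.Finite := by
    by_contra hinf
    obtain ⟨c, hcsub, hccard⟩ := Set.Infinite.exists_subset_card_eq hinf (n + 1)
    -- choose preimages of elements of c
    have hget : ∀ u : ↥(↑c : Set (ι → ZMod 2)), ∃ x, x ∈ M.E ∧ φ x = (u : ι → ZMod 2) := by
      intro u
      obtain ⟨x, hx, he⟩ := hbsub (hcsub u.2)
      exact ⟨x, hx, he⟩
    choose g hgE hgφ using hget
    set I : Set α := Set.range g with hI
    have hIE : I ⊆ M.E := by
      rintro x ⟨u, rfl⟩
      exact hgE u
    have hφinj : Set.InjOn φ I := by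
      rintro x ⟨u, rfl⟩ y ⟨u', rfl⟩ hxy
      rw [hgφ u, hgφ u'] at hxy
      rw [Subtype.ext hxy]
    have hφI : φ '' I = (↑c : Set (ι → ZMod 2)) := by
      apply Set.eq_of_subset_of_subset
      · rintro _ ⟨x, ⟨u, rfl⟩, rfl⟩
        rw [hgφ u]
        exact u.2
      · intro u hu
        exact ⟨g ⟨u, hu⟩, ⟨⟨u, hu⟩, rfl⟩, hgφ ⟨u, hu⟩⟩
    have hliI : LinearIndependent (ZMod 2) (fun x : I => φ x) := by
      rw [linearIndependent_set_coe_iff, linearIndepOn_iff_image hφinj, hφI]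
      exact (linearIndependent_subtype_iff.1 hbli).mono hcsub
    have hIndep : M.Indep I := (hφ I).2 ⟨hIE, hliI⟩
    have hIcard : I.encard = (n + 1 : ℕ) := by
      have h1 : (φ '' I).encard = I.encard := hφinj.encard_image
      rw [hφI] at h1
      rw [← h1, Set.encard_coe_eq_coe_finsetCard, hccard]
    have := hindep_le I hIndep
    rw [hIcard] at this
    have : (n + 1 : ℕ) ≤ (n : ℕ) := by exact_mod_cast this
    omega
  -- enumerate b
  set bf := hbfin.toFinset with hbf
  set m := bf.card with hm
  set vb : Fin m → (ι → ZMod 2) := fun i => ↑(bf.equivFin.symm i) with hvb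
  have hvbli : LinearIndependent (ZMod 2) vb := by
    have hinj : Function.Injective (fun i : Fin m => (⟨↑(bf.equivFin.symm i),
        hbfin.mem_toFinset.1 (bf.equivFin.symm i).2⟩ : ↥b)) := by
      intro i j h
      have := congrArg (Subtype.val) h
      exact bf.equivFin.symm.injective (Subtype.ext this)
    exact hbli.comp _ hinj
  have hvbrange : Set.range vb = b := by
    apply Set.eq_of_subset_of_subset
    · rintro _ ⟨i, rfl⟩
      exact hbfin.mem_toFinset.1 (bf.equivFin.symm i).2
    · intro u hu
      exact ⟨bf.equivFin ⟨u, hbfin.mem_toFinset.2 hu⟩, by simp [hvb]⟩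
  set Wv := Submodule.span (ZMod 2) (Set.range vb) with hWv
  have hWmem : ∀ x ∈ M.E, φ x ∈ Wv := by
    intro x hx
    rw [hWv, hvbrange, hbspan]
    exact Submodule.subset_span ⟨x, hx, rfl⟩
  set Bs : Module.Basis (Fin m) (ZMod 2) ↥Wv := Module.Basis.span hvbli with hBs
  set ψ : α → (Fin m → ZMod 2) := fun x =>
    if h : φ x ∈ Wv then Bs.equivFun ⟨φ x, h⟩ else 0 with hψ
  -- transfer of linear independence
  have hψφ : ∀ I : Set α, I ⊆ M.E →
      (LinearIndependent (ZMod 2) (fun x : I => ψ x) ↔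
       LinearIndependent (ZMod 2) (fun x : I => φ x)) := by
    intro I hIE
    set uu : I → ↥Wv := fun x => ⟨φ x, hWmem x (hIE x.2)⟩ with huu
    have h1 : (fun x : I => ψ x) = ⇑(Bs.equivFun.toLinearMap) ∘ uu := by
      funext x
      simp only [hψ, Function.comp_apply, LinearEquiv.coe_coe]
      rw [dif_pos (hWmem x (hIE x.2))]
    have h2 : (fun x : I => φ x) = ⇑(Wv.subtype) ∘ uu := rfl
    rw [h1, h2]
    rw [LinearMap.linearIndependent_iff Bs.equivFun.toLinearMap (LinearEquiv.ker _),
      LinearMap.linearIndependent_iff Wv.subtype (Submodule.ker_subtype _)]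
  have hcorr : ∀ I : Set α, I ⊆ M.E →
      (M.Indep I ↔ LinearIndependent (ZMod 2) (fun x : I => ψ x)) := by
    intro I hIE
    rw [hφ I, hψφ I hIE]
    exact ⟨fun h => h.2, fun h => ⟨hIE, h⟩⟩
  have hψ0 : ∀ x ∈ M.E, ψ x ≠ 0 := by
    intro x hx
    have h1 : M.Indep {x} := hloop x hx
    have h2 := (hcorr {x} (by simpa)).1 h1
    have := h2.ne_zero ⟨x, rfl⟩
    simpa using this
  clear_value ψ
  -- parameters
  set t := Nat.log 2 n with hT
  have ht1 : 1 ≤ t := Nat.log_pos (by norm_num) hn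
  have htn : 2 ^ t ≤ n := Nat.pow_log_le_self 2 (by omega)
  have htltn : t < n := lt_of_lt_of_le Nat.lt_two_pow_self htn
  set k := Fintype.card (Matrix (Fin t) (Fin m) (ZMod 2)) with hk
  have kpos : 0 < k := Fintype.card_pos
  set eqk : Matrix (Fin t) (Fin m) (ZMod 2) ≃ Fin k := Fintype.equivFin _ with heqk
  have hbound : ∀ (L : Matrix (Fin t) (Fin m) (ZMod 2)) (x : α),
      Nat.log 2 (vval (L.mulVec (ψ x))) < n := by
    intro L x
    by_cases h : vval (L.mulVec (ψ x)) = 0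
    · rw [h]
      simpa using npos
    · exact lt_trans ((Nat.log_lt_iff_lt_pow (by norm_num) h).2 (vval_lt _)) htltn
  set fL : Matrix (Fin t) (Fin m) (ZMod 2) → α → Fin n := fun L x =>
    ⟨Nat.log 2 (vval (L.mulVec (ψ x))) % n, Nat.mod_lt _ npos⟩ with hfL
  refine ⟨k, kpos, fun i => fL (eqk.symm i), ?_, ?_⟩
  · -- condition (i)
    intro i S hS
    set L := eqk.symm i with hL
    obtain ⟨R, hRS, hbij⟩ := Set.exists_subset_bijOn S (fL L)
    have hRE : R ⊆ M.E := hRS.trans hS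
    have hinjval : Function.Injective (fun x : R => Nat.log 2 (vval (L.mulVec (ψ x)))) := by
      intro x y h
      simp only at h
      apply Subtype.ext
      apply hbij.injOn x.2 y.2
      simp only [hfL]
      congr 1
      rw [h]
    have hli := key_indep L (fun x : R => ψ x) (fun x => hψ0 x (hRE x.2)) hinjval
    have hR : M.Indep R := (hcorr R hRE).2 hli
    calc (fL L '' S).encard = (fL L '' R).encard := by rw [hbij.image_eq]
      _ = R.encard := hbij.injOn.encard_image
      _ ≤ mRank M S := mRank_le_of hR hRS
  · -- condition (ii)
    intro S hS
    have hfin : mRank M S ≠ ⊤ := by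
      intro h
      have h2 := mRank_mono_ground (M := M) (S := S)
      rw [h, hrank] at h2
      exact (by simp : ¬ ((⊤:ℕ∞) ≤ (n:ℕ∞))) h2
    set N := (mRank M S).toNat with hNdef
    rcases Nat.eq_zero_or_pos N with hN0 | hNpos
    · rw [hN0]
      simp only [Nat.cast_zero, mul_zero]
      apply div_nonneg (Finset.sum_nonneg fun i _ => by positivity) (by positivity)
    obtain ⟨I, hIindep, hIS, hIcard⟩ := mRank_attained hfin
    have hNS : mRank M S = (N : ℕ∞) := (ENat.coe_toNat hfin).symm
    rw [hNS] at hIcard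
    have hIfin : I.Finite := Set.finite_of_encard_eq_coe hIcard
    set IF := hIfin.toFinset with hIF
    set r := IF.card with hrdef
    have hrN : r = N := by
      have h2 := hIfin.encard_eq_coe_toFinset_card
      rw [hIcard] at h2
      exact_mod_cast h2.symm
    have hrn : r ≤ n := by
      have h1 : mRank M S ≤ (n:ℕ∞) := by rw [← hrank]; exact mRank_mono_ground
      have h2 := ENat.toNat_le_toNat h1 (by simp)
      simp only [ENat.toNat_coe] at h2
      omega
    have hr1 : 1 ≤ r := by omega
    obtain ⟨xf, hxfinj, hxfI⟩ : ∃ xf : Fin r → α, Function.Injective xf ∧ ∀ i, xf i ∈ I :=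
      ⟨fun i => ↑(IF.equivFin.symm i),
       fun i j h => IF.equivFin.symm.injective (Subtype.ext h),
       fun i => hIfin.mem_toFinset.1 (IF.equivFin.symm i).2⟩
    set v : Fin r → (Fin m → ZMod 2) := fun i => ψ (xf i) with hv
    have hvli : LinearIndependent (ZMod 2) v := by
      rw [hv]
      have h1 := (hcorr I (hIS.trans hS)).1 hIindep
      have h2 : Function.Injective (fun i : Fin r => (⟨xf i, hxfI i⟩ : ↥I)) := by
        intro i j h
        have h3 : xf i = xf j := congrArg Subtype.val h
        exact hxfinj h3
      exact h1.comp _ h2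
    set T : Matrix (Fin t) (Fin m) (ZMod 2) →+ (Fin r → Fin t → ZMod 2) :=
      { toFun := fun L i => L.mulVec (v i),
        map_zero' := by funext i; simp [Matrix.zero_mulVec],
        map_add' := by intro L L'; funext i; simp [Matrix.add_mulVec] } with hTdef
    have hTsurj : Function.Surjective T := mulVec_family_surjective hvli
    set g : (Fin r → Fin t → ZMod 2) → ℕ := fun w =>
      ((Finset.univ.filter (fun i => w i ≠ 0)).image
        (fun i => Nat.log 2 (vval (w i)))).card with hg
    -- pointwise lower bound
    have hF1 : ∀ L : Matrix (Fin t) (Fin m) (ZMod 2), g (T L) ≤ (fL L '' S).ncard := by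
      intro L
      have hJlt : ∀ j ∈ ((Finset.univ.filter (fun i => T L i ≠ 0)).image
          (fun i => Nat.log 2 (vval (T L i)))), j < n := by
        intro j hj
        simp only [Finset.mem_image, Finset.mem_filter, Finset.mem_univ, true_and] at hj
        obtain ⟨i, _, rfl⟩ := hj
        exact hbound L (xf i)
      have hsub : ↑(((Finset.univ.filter (fun i => T L i ≠ 0)).image
          (fun i => Nat.log 2 (vval (T L i)))).image
          (fun j => (⟨j % n, Nat.mod_lt _ npos⟩ : Fin n))) ⊆ fL L '' S := by
        intro y hy
        simp only [Finset.coe_image, Set.mem_image, Finset.mem_coe, Finset.mem_image,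
          Finset.mem_filter, Finset.mem_univ, true_and] at hy
        obtain ⟨j, ⟨i, hi0, rfl⟩, rfl⟩ := hy
        exact ⟨xf i, hIS (hxfI i), rfl⟩
      have hcard1 : (((Finset.univ.filter (fun i => T L i ≠ 0)).image
          (fun i => Nat.log 2 (vval (T L i)))).image
          (fun j => (⟨j % n, Nat.mod_lt _ npos⟩ : Fin n))).card
          = ((Finset.univ.filter (fun i => T L i ≠ 0)).image
          (fun i => Nat.log 2 (vval (T L i)))).card := by
        apply Finset.card_image_of_injOn
        intro j hj j' hj' h
        have h2 := congrArg Fin.val h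
        simp only at h2
        rwa [Nat.mod_eq_of_lt (hJlt j hj), Nat.mod_eq_of_lt (hJlt j' hj')] at h2
      calc g (T L) = (((Finset.univ.filter (fun i => T L i ≠ 0)).image
              (fun i => Nat.log 2 (vval (T L i)))).image
              (fun j => (⟨j % n, Nat.mod_lt _ npos⟩ : Fin n))).card := hcard1.symm
        _ = (↑(((Finset.univ.filter (fun i => T L i ≠ 0)).image
              (fun i => Nat.log 2 (vval (T L i)))).image
              (fun j => (⟨j % n, Nat.mod_lt _ npos⟩ : Fin n))) : Set (Fin n)).ncard :=
            (Set.ncard_coe_finset _).symm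
        _ ≤ (fL L '' S).ncard := Set.ncard_le_ncard hsub (Set.toFinite _)
    have hF2 := sum_comp_surj_addhom T hTsurj g
    set Q := Fintype.card (Fin r → Fin t → ZMod 2) with hQ
    have hQval : Q = (2^t)^r := by
      rw [hQ, Fintype.card_fun]
      have h1 : Fintype.card (Fin t → ZMod 2) = 2 ^ t := by
        rw [Fintype.card_fun]; simp [ZMod.card]
      rw [h1]
      simp
    have hQpos : 0 < Q := Fintype.card_pos
    -- sum of g over all tuples
    have hsum_g : ∑ w : Fin r → Fin t → ZMod 2, g w
        = ∑ j ∈ Finset.range t, (Finset.univ.filter (fun w : Fin r → Fin t → ZMod 2 =>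
            ∃ i, w i ≠ 0 ∧ Nat.log 2 (vval (w i)) = j)).card := by
      have hgw : ∀ w : Fin r → Fin t → ZMod 2, g w = ∑ j ∈ Finset.range t,
          if (∃ i, w i ≠ 0 ∧ Nat.log 2 (vval (w i)) = j) then 1 else 0 := by
        intro w
        have heq : ((Finset.univ.filter (fun i => w i ≠ 0)).image
            (fun i => Nat.log 2 (vval (w i))))
            = (Finset.range t).filter
              (fun j => ∃ i, w i ≠ 0 ∧ Nat.log 2 (vval (w i)) = j) := by
          ext j
          simp only [Finset.mem_image, Finset.mem_filter, Finset.mem_range, Finset.mem_univ,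
            true_and]
          constructor
          · rintro ⟨i, hi0, rfl⟩
            have hvne : vval (w i) ≠ 0 := fun h => hi0 ((vval_eq_zero_iff (w i)).1 h)
            exact ⟨(Nat.log_lt_iff_lt_pow (by norm_num) hvne).2 (vval_lt (w i)),
              i, hi0, rfl⟩
          · rintro ⟨-, i, hi0, he⟩
            exact ⟨i, hi0, he⟩
        rw [hg]
        simp only
        rw [heq, Finset.card_filter]
      rw [Finset.sum_congr rfl (fun w _ => hgw w), Finset.sum_comm]
      exact Finset.sum_congr rfl fun j _ => (Finset.card_filter _ _).symm
    -- parameters a, s'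
    set a := Nat.log 2 r with ha
    set s' := max 1 (min a t) with hs'
    have hF3 : s' * Q ≤ 2 * ∑ w : Fin r → Fin t → ZMod 2, g w := by
      have hcnt : ∀ j ∈ Finset.range t,
          (Finset.univ.filter (fun w : Fin r → Fin t → ZMod 2 =>
            ∃ i, w i ≠ 0 ∧ Nat.log 2 (vval (w i)) = j)).card
          = (2^t)^r - (2^t - 2^j)^r := fun j hj => cnt_eq j (Finset.mem_range.1 hj)
      rw [hQval, hsum_g, Finset.sum_congr rfl hcnt]
      exact F3_main ht1 hr1
    have hra : r < 2^(a+1) := by rw [ha]; exact Nat.lt_pow_succ_log_self (by norm_num) r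
    have hF4 : 4 * t * r ≤ s' * (16 * n) := f4_arith ht1 hr1 hrn htn hra
    -- nat chain : k * s' ≤ 2 * Σ_L ncard
    have hchain : k * s' * Q ≤ (2 * ∑ L, (fL L '' S).ncard) * Q := by
      calc k * s' * Q = (s' * Q) * k := by ring
        _ ≤ (2 * ∑ w : Fin r → Fin t → ZMod 2, g w) * k := Nat.mul_le_mul_right _ hF3
        _ = 2 * (k * ∑ w : Fin r → Fin t → ZMod 2, g w) := by ring
        _ = 2 * ((∑ L, g (T L)) * Q) := by rw [← hF2]
        _ ≤ 2 * ((∑ L, (fL L '' S).ncard) * Q) := by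
            apply Nat.mul_le_mul_left
            apply Nat.mul_le_mul_right
            exact Finset.sum_le_sum fun L _ => hF1 L
        _ = (2 * ∑ L, (fL L '' S).ncard) * Q := by ring
    have hfinal_nat : k * s' ≤ 2 * ∑ L, (fL L '' S).ncard :=
      Nat.le_of_mul_le_mul_right hchain hQpos
    -- reals
    have hk0 : (0:ℝ) < k := by exact_mod_cast kpos
    have hn0 : (0:ℝ) < n := by exact_mod_cast npos
    have hsumeq : ∑ i : Fin k, ((fL (eqk.symm i) '' S).ncard : ℝ)
        = ∑ L, ((fL L '' S).ncard : ℝ) :=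
      Equiv.sum_comp eqk.symm (fun L => ((fL L '' S).ncard : ℝ))
    have hNr : ((mRank M S).toNat : ℝ) = (r : ℝ) := by
      rw [← hNdef, hrN]
    have hlogb : Real.logb 2 n ≤ 2 * t := by
      have h1 : (n:ℝ) < (2:ℝ)^(t+1) := by
        exact_mod_cast Nat.lt_pow_succ_log_self (by norm_num) n
      have h2 : Real.logb 2 (n:ℝ) < Real.logb 2 ((2:ℝ)^(t+1)) :=
        Real.logb_lt_logb (by norm_num) (by exact_mod_cast npos) h1
      have h3 : Real.logb 2 ((2:ℝ)^(t+1)) = (t:ℝ)+1 := by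
        rw [Real.logb_pow, Real.logb_self_eq_one (by norm_num)]
        push_cast
        ring
      rw [h3] at h2
      have ht1' : (1:ℝ) ≤ t := by exact_mod_cast ht1
      linarith
    have hS2 : (s' : ℝ) / 2 ≤ (∑ L, ((fL L '' S).ncard : ℝ)) / k := by
      rw [div_le_div_iff₀ (by norm_num) hk0]
      have hcast : ((k * s' : ℕ) : ℝ) ≤ ((2 * ∑ L, (fL L '' S).ncard : ℕ) : ℝ) := by
        exact_mod_cast hfinal_nat
      push_cast at hcast
      linarith
    have hL2 : Real.logb 2 n / (16 * n) * r ≤ (s' : ℝ)/2 := by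
      have hr0 : (0:ℝ) ≤ r := Nat.cast_nonneg _
      have h1 : Real.logb 2 n * r ≤ 2 * t * r :=
        mul_le_mul_of_nonneg_right hlogb hr0
      have h2 : (4 * t * r : ℝ) ≤ (s' : ℝ) * (16 * n) := by exact_mod_cast hF4
      rw [div_mul_eq_mul_div, div_le_div_iff₀ (by positivity) (by norm_num)]
      nlinarith [h1, h2]
    rw [hNr, hsumeq]
    exact hL2.trans hS2
end
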